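/- Let R be an integral domain in which every nonzero proper ideal can be written as a product of prime ideals. Then R is a Dedekind domain. -/

import Mathlib

open Ideal
open scoped nonZeroDivisors

section Aux

variable {R : Type*} [CommRing R] [IsDomain R]

/-- Invertibility of an (integral) ideal, phrased without fractional ideals. -/
def ZPI.Inv (I : Ideal R) : Prop :=
  ∃ (J : Ideal R) (c : R), c ≠ 0 ∧ I * J = Ideal.span {c}

namespace ZPI

omit [IsDomain R] in
lemma inv_span {c : R} (hc : c ≠ 0) : Inv (Ideal.span {c} : Ideal R) :=
  ⟨⊤, c, hc, Ideal.mul_top _⟩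

lemma inv_top : Inv (⊤ : Ideal R) := by
  refine ⟨⊤, 1, one_ne_zero, ?_⟩
  simp [Ideal.span_singleton_one]

omit [IsDomain R] in
lemma Inv.of_mul_left {I J : Ideal R} (h : Inv (I * J)) : Inv I := by
  obtain ⟨K, c, hc, hK⟩ := h
  exact ⟨J * K, c, hc, by rwa [← mul_assoc]⟩

lemma Inv.cancel {I A B : Ideal R} (h : Inv I) (hab : I * A = I * B) : A = B := by
  obtain ⟨J, c, hc, hJ⟩ := h
  have : Ideal.span {c} * A = Ideal.span {c} * B := by
    rw [← hJ, mul_assoc, mul_assoc, mul_comm J A, mul_comm J B, ← mul_assoc, ← mul_assoc, hab]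
  exact Ideal.span_singleton_mul_right_injective hc this

omit [IsDomain R] in
lemma Inv.ne_bot {I : Ideal R} (h : Inv I) : I ≠ ⊥ := by
  obtain ⟨J, c, hc, hJ⟩ := h
  intro hI
  rw [hI, bot_mul] at hJ
  exact hc (Ideal.span_singleton_eq_bot.mp hJ.symm)

lemma Inv.mul {I J : Ideal R} (hI : Inv I) (hJ : Inv J) : Inv (I * J) := by
  obtain ⟨K, c, hc, hK⟩ := hI
  obtain ⟨L, d, hd, hL⟩ := hJ
  refine ⟨K * L, c * d, mul_ne_zero hc hd, ?_⟩
  rw [show I * J * (K * L) = (I * K) * (J * L) by ring, hK, hL,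
    Ideal.span_singleton_mul_span_singleton]

/-- Uniqueness of factorization into prime ideals (with invertible product) in a domain. -/
lemma unique_factorization :
    ∀ (s t : Multiset (Ideal R)), (∀ p ∈ s, p.IsPrime) → (∀ p ∈ t, p.IsPrime) →
      Inv s.prod → s.prod = t.prod → s = t := by
  classical
  intro s
  induction s using Multiset.strongInductionOn with
  | ih s ih =>
  intro t hs ht hinv heq
  rcases Multiset.empty_or_exists_mem s with rfl | ⟨p, hp⟩
  · rcases Multiset.empty_or_exists_mem t with rfl | ⟨q, hq⟩
    · rfl
    · exfalso
      have h1 : t.prod ≤ q := Ideal.multiset_prod_le_inf.trans (Multiset.inf_le hq)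
      rw [← heq, Multiset.prod_zero, Ideal.one_eq_top] at h1
      exact (ht q hq).ne_top (top_le_iff.mp h1)
  · -- pick a minimal element of `s`
    obtain ⟨p₀, hp₀s, hp₀min⟩ : ∃ p₀ ∈ s, ∀ x ∈ s, x ≤ p₀ → x = p₀ := by
      obtain ⟨p₀, h1, h2⟩ := s.toFinset.exists_minimal ⟨p, Multiset.mem_toFinset.mpr hp⟩
      refine ⟨p₀, Multiset.mem_toFinset.mp h1, fun x hx hle => ?_⟩
      by_contra hne
      exact hne (le_antisymm hle (h2 (Multiset.mem_toFinset.mpr hx) hle))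
    have hsp₀ : s.prod ≤ p₀ := Ideal.multiset_prod_le_inf.trans (Multiset.inf_le hp₀s)
    obtain ⟨q, hqt, hqp₀⟩ := (hs p₀ hp₀s).multiset_prod_le.mp (heq ▸ hsp₀)
    have hstq : s.prod ≤ q := heq ▸ (Ideal.multiset_prod_le_inf.trans (Multiset.inf_le hqt))
    obtain ⟨p', hp's, hp'q⟩ := (ht q hqt).multiset_prod_le.mp hstq
    have hp'p₀ : p' = p₀ := hp₀min p' hp's (hp'q.trans hqp₀)
    have hqeq : q = p₀ := le_antisymm hqp₀ (hp'p₀ ▸ hp'q)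
    subst hqeq
    -- cancel `q` on both sides
    have hseq : s = q ::ₘ s.erase q := (Multiset.cons_erase hp₀s).symm
    have hteq : t = q ::ₘ t.erase q := (Multiset.cons_erase hqt).symm
    have hprod : q * (s.erase q).prod = q * (t.erase q).prod := by
      rw [← Multiset.prod_cons, ← Multiset.prod_cons, ← hseq, ← hteq, heq]
    have hq_inv : Inv q := by
      have : Inv (q * (s.erase q).prod) := by
        rwa [← Multiset.prod_cons, ← hseq]
      exact this.of_mul_left
    have hrest_inv : Inv (s.erase q).prod := by
      have : Inv ((s.erase q).prod * q) := by
        rwa [mul_comm, ← Multiset.prod_cons, ← hseq]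
      exact this.of_mul_left
    have hrec := ih (s.erase q) (Multiset.erase_lt.mpr hp₀s) (t.erase q)
      (fun r hr => hs r (Multiset.mem_of_mem_erase hr))
      (fun r hr => ht r (Multiset.mem_of_mem_erase hr))
      hrest_inv (hq_inv.cancel hprod)
    rw [hseq, hteq, hrec]

lemma inv_multiset_prod {s : Multiset (Ideal R)} (hs : ∀ p ∈ s, Inv p) : Inv s.prod := by
  induction s using Multiset.induction with
  | empty => rw [Multiset.prod_zero, Ideal.one_eq_top]; exact inv_top
  | cons a s ih =>
    rw [Multiset.prod_cons]
    exact (hs a (Multiset.mem_cons_self a s)).mul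
      (ih fun p hp => hs p (Multiset.mem_cons_of_mem hp))

variable (h : ∀ I : Ideal R, I ≠ ⊥ → I ≠ ⊤ →
      ∃ s : Multiset (Ideal R), (∀ p ∈ s, p.IsPrime) ∧ s.prod = I)

include h

/-- An invertible prime ideal is maximal. -/
lemma maximal_of_inv_prime {P : Ideal R} (hP : P.IsPrime) (hinv : Inv P) : P.IsMaximal := by
  classical
  have key : ∀ a : R, a ∉ P → P ⊔ Ideal.span {a} = ⊤ := by
    intro a haP
    by_contra hne
    have ha0 : a ≠ 0 := fun h0 => haP (h0 ▸ P.zero_mem)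
    set A := P ⊔ Ideal.span {a} with hA
    set B := P ⊔ Ideal.span {a ^ 2} with hB
    have hspan_le : Ideal.span {a ^ 2} ≤ Ideal.span ({a} : Set R) := by
      rw [Ideal.span_singleton_le_span_singleton]; exact ⟨a, sq a⟩
    have hBA : B ≤ A := sup_le_sup_left hspan_le P
    have hAbot : A ≠ ⊥ := fun h0 =>
      ha0 (Ideal.span_singleton_eq_bot.mp (le_bot_iff.mp (h0 ▸ (le_sup_right : _ ≤ A))))
    have hBbot : B ≠ ⊥ := fun h0 =>
      pow_ne_zero 2 ha0 (Ideal.span_singleton_eq_bot.mp (le_bot_iff.mp (h0 ▸ (le_sup_right : _ ≤ B))))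
    have hBtop : B ≠ ⊤ := fun h0 => hne (top_le_iff.mp (h0 ▸ hBA))
    obtain ⟨s, hsP, hsprod⟩ := h A hAbot hne
    obtain ⟨t, htP, htprod⟩ := h B hBbot hBtop
    have hPles : ∀ p ∈ s, P ≤ p := fun p hp =>
      le_trans ((le_sup_left : P ≤ A).trans hsprod.ge)
        (Ideal.multiset_prod_le_inf.trans (Multiset.inf_le hp))
    have hPlet : ∀ p ∈ t, P ≤ p := fun p hp =>
      le_trans ((le_sup_left : P ≤ B).trans htprod.ge)
        (Ideal.multiset_prod_le_inf.trans (Multiset.inf_le hp))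
    set f := Ideal.Quotient.mk P with hf
    have hfs : Function.Surjective f := Ideal.Quotient.mk_surjective
    have habar : f a ≠ 0 := fun h0 => haP (Ideal.Quotient.eq_zero_iff_mem.mp h0)
    have hmapA : Ideal.map f A = Ideal.span {f a} := by
      rw [hA, Ideal.map_sup, Ideal.map_quotient_self, bot_sup_eq, Ideal.map_span,
        Set.image_singleton]
    have hmapB : Ideal.map f B = Ideal.span {f a} * Ideal.span {f a} := by
      rw [hB, Ideal.map_sup, Ideal.map_quotient_self, bot_sup_eq, Ideal.map_span,
        Set.image_singleton, Ideal.span_singleton_mul_span_singleton, sq, _root_.map_mul]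
    have hker : ∀ p : Ideal R, P ≤ p → RingHom.ker f ≤ p := fun p hp => by
      rw [hf, Ideal.mk_ker]; exact hp
    have hs' : ∀ q ∈ s.map (Ideal.map f), q.IsPrime := by
      intro q hq
      obtain ⟨p, hp, rfl⟩ := Multiset.mem_map.mp hq
      haveI := hsP p hp
      exact Ideal.map_isPrime_of_surjective hfs (hker p (hPles p hp))
    have ht' : ∀ q ∈ t.map (Ideal.map f), q.IsPrime := by
      intro q hq
      obtain ⟨p, hp, rfl⟩ := Multiset.mem_map.mp hq
      haveI := htP p hp
      exact Ideal.map_isPrime_of_surjective hfs (hker p (hPlet p hp))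
    have hsbar : (s.map (Ideal.map f)).prod = Ideal.span {f a} := by
      have h2 := map_multiset_prod (Ideal.mapHom f) s
      simp only [Ideal.mapHom_apply] at h2
      rw [← h2, hsprod, hmapA]
    have htbar : (t.map (Ideal.map f)).prod = Ideal.span {f a} * Ideal.span {f a} := by
      have h2 := map_multiset_prod (Ideal.mapHom f) t
      simp only [Ideal.mapHom_apply] at h2
      rw [← h2, htprod, hmapB]
    have hst : s.map (Ideal.map f) + s.map (Ideal.map f) = t.map (Ideal.map f) := by
      apply unique_factorization
      · intro q hq; rcases Multiset.mem_add.mp hq with hq | hq <;> exact hs' q hq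
      · exact ht'
      · rw [Multiset.prod_add, hsbar, Ideal.span_singleton_mul_span_singleton]
        exact inv_span (mul_ne_zero habar habar)
      · rw [Multiset.prod_add, hsbar, htbar]
    have hcomap : ∀ p : Ideal R, P ≤ p → Ideal.comap f (Ideal.map f p) = p := fun p hp => by
      rw [Ideal.comap_map_of_surjective f hfs, ← RingHom.ker_eq_comap_bot, hf, Ideal.mk_ker,
        sup_eq_left.mpr hp]
    have hmapsid : s.map (fun p => Ideal.comap f (Ideal.map f p)) = s := by
      rw [Multiset.map_congr rfl (fun p hp => hcomap p (hPles p hp)), Multiset.map_id']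
    have hmaptid : t.map (fun p => Ideal.comap f (Ideal.map f p)) = t := by
      rw [Multiset.map_congr rfl (fun p hp => hcomap p (hPlet p hp)), Multiset.map_id']
    have hts : s + s = t := by
      have h2 := congrArg (Multiset.map (Ideal.comap f)) hst
      rw [Multiset.map_add, Multiset.map_map, Multiset.map_map] at h2
      simp only [Function.comp_def] at h2
      rwa [hmapsid, hmaptid] at h2
    have hBAA : B = A * A := by
      rw [← htprod, ← hts, Multiset.prod_add, hsprod]
    have hPle : P ≤ P * A := by
      intro x hx
      have hxB : x ∈ B := (le_sup_left : P ≤ B) hx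
      rw [hBAA] at hxB
      have hAA : A * A ≤ P * P ⊔ Ideal.span {a} := by
        rw [hA, Ideal.sup_mul, Ideal.mul_sup, Ideal.mul_sup]
        refine sup_le (sup_le le_sup_left ?_) (sup_le ?_ ?_)
        · exact le_sup_of_le_right Ideal.mul_le_right
        · exact le_sup_of_le_right Ideal.mul_le_left
        · exact le_sup_of_le_right Ideal.mul_le_right
      obtain ⟨y, hy, z, hz, hxyz⟩ := Submodule.mem_sup.mp (hAA hxB)
      obtain ⟨r, hr⟩ := Ideal.mem_span_singleton'.mp hz
      have hyP : y ∈ P := Ideal.mul_le_left hy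
      have hraP : r * a ∈ P := by
        have hsub : x - y ∈ P := P.sub_mem hx hyP
        rwa [← hxyz, add_sub_cancel_left, ← hr] at hsub
      have hrP : r ∈ P := (hP.mem_or_mem hraP).resolve_right haP
      rw [hA, Ideal.mul_sup]
      refine Submodule.mem_sup.mpr ⟨y, hy, z, ?_, hxyz⟩
      rw [← hr]
      exact Ideal.mul_mem_mul hrP (Ideal.mem_span_singleton_self a)
    have hPA : P * A = P * ⊤ := by
      rw [mul_top]
      exact le_antisymm Ideal.mul_le_left hPle
    exact hne (hinv.cancel hPA)
  refine ⟨⟨hP.ne_top, fun J hJ => ?_⟩⟩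
  obtain ⟨a, haJ, haP⟩ := SetLike.exists_of_lt hJ
  rw [eq_top_iff, ← key a haP]
  exact sup_le hJ.le ((Ideal.span_singleton_le_iff_mem _).mpr haJ)

/-- Every nonzero prime ideal is invertible. -/
lemma inv_of_prime_ne_bot {P : Ideal R} (hP : P.IsPrime) (hPbot : P ≠ ⊥) : Inv P := by
  classical
  obtain ⟨a, haP, ha0⟩ := Submodule.exists_mem_ne_zero_of_ne_bot hPbot
  have hspan_bot : Ideal.span ({a} : Set R) ≠ ⊥ := by
    simpa [Ideal.span_singleton_eq_bot] using ha0
  have hspan_le : Ideal.span {a} ≤ P := (Ideal.span_singleton_le_iff_mem _).mpr haP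
  have hspan_top : Ideal.span ({a} : Set R) ≠ ⊤ := fun h0 =>
    hP.ne_top (top_le_iff.mp (h0 ▸ hspan_le))
  obtain ⟨s, hsP, hsprod⟩ := h _ hspan_bot hspan_top
  have hle : s.prod ≤ P := hsprod ▸ hspan_le
  obtain ⟨p, hps, hpP⟩ := hP.multiset_prod_le.mp hle
  have hpinv : Inv p := ⟨(s.erase p).prod, a, ha0, by
    rw [← Multiset.prod_cons, Multiset.cons_erase hps, hsprod]⟩
  have hpmax := maximal_of_inv_prime h (hsP p hps) hpinv
  have hpeq : p = P := hpmax.eq_of_le hP.ne_top hpP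
  rwa [← hpeq]

/-- Every nonzero ideal is invertible. -/
lemma inv_of_ne_bot {I : Ideal R} (hI : I ≠ ⊥) : Inv I := by
  by_cases htop : I = ⊤
  · exact htop ▸ inv_top
  obtain ⟨s, hsP, hsprod⟩ := h I hI htop
  rw [← hsprod]
  refine inv_multiset_prod fun p hp => inv_of_prime_ne_bot h (hsP p hp) fun hb => hI ?_
  refine le_bot_iff.mp (hsprod ▸ ?_)
  exact le_trans (Ideal.multiset_prod_le_inf.trans (Multiset.inf_le hp)) hb.le

end ZPI

end Aux

/-- If every nonzero proper ideal of an integral domain R is a product of prime ideals,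
then R is a Dedekind domain. -/
theorem stmt18 (R : Type*) [CommRing R] [IsDomain R]
    (h : ∀ I : Ideal R, I ≠ ⊥ → I ≠ ⊤ →
      ∃ s : Multiset (Ideal R), (∀ p ∈ s, p.IsPrime) ∧ s.prod = I) :
    IsDedekindDomain R := by
  have hinv : ∀ I : Ideal R, I ≠ ⊥ → ZPI.Inv I := fun I hI => ZPI.inv_of_ne_bot h hI
  letI K := FractionRing R
  have hDDI : IsDedekindDomain R := by
    rw [isDedekindDomain_iff_mul_inv_cancel (K := FractionRing R)]
    intro I hI
    rw [FractionalIdeal.mul_inv_cancel_iff_isUnit (K := FractionRing R)]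
    have hunit_span : ∀ x : FractionRing R, x ≠ 0 →
        IsUnit (FractionalIdeal.spanSingleton R⁰ x) := fun x hx =>
      isUnit_iff_exists_inv.mpr ⟨FractionalIdeal.spanSingleton R⁰ x⁻¹, by
        rw [FractionalIdeal.spanSingleton_mul_spanSingleton, mul_inv_cancel₀ hx,
          FractionalIdeal.spanSingleton_one]⟩
    have hnum : I.num ≠ ⊥ := fun h0 =>
      hI (FractionalIdeal.zero_of_num_eq_bot zero_notMem_nonZeroDivisors h0)
    obtain ⟨J, c, hc, hJ⟩ := hinv I.num hnum
    have hu1 : IsUnit (I.num : FractionalIdeal R⁰ (FractionRing R)) := by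
      refine isUnit_of_mul_isUnit_left (y := (J : FractionalIdeal R⁰ (FractionRing R))) ?_
      rw [← FractionalIdeal.coeIdeal_mul, hJ, FractionalIdeal.coeIdeal_span_singleton]
      exact hunit_span _ ((map_ne_zero_iff _ (IsFractionRing.injective R (FractionRing R))).mpr hc)
    have hkey := FractionalIdeal.den_mul_self_eq_num' (S := R⁰) (P := FractionRing R) I
    exact isUnit_of_mul_isUnit_right (show IsUnit (_ * I) from hkey ▸ hu1)
  exact hDDI
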